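/- As an identity of formal power series in z, the generating function of modular noncrossing (i.e., 2-noncrossing) diagrams satisfies ∑_{n≥0} Q_2(n) z^n = ((1 − z² + z⁴)/(1 − z − z² + z³ + 2z⁴ + z⁶)) · F_2((z⁴ − z⁶ + z⁸)/(1 − z − z² + z³ + 2z⁴ + z⁶)²). -/

import Mathlib

open scoped Classical

namespace ModularDiagrams

/-- A diagram over `n` vertices: a set of arcs `(i,j)` with `1 ≤ i < j ≤ n`,
pairwise vertex-disjoint (every vertex has degree at most one). -/
def IsDiagram (n : ℕ) (A : Finset (ℕ × ℕ)) : Prop :=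
  (∀ a ∈ A, 1 ≤ a.1 ∧ a.1 < a.2 ∧ a.2 ≤ n) ∧
  (∀ a ∈ A, ∀ b ∈ A, a ≠ b →
    a.1 ≠ b.1 ∧ a.1 ≠ b.2 ∧ a.2 ≠ b.1 ∧ a.2 ≠ b.2)

/-- `A` contains a `k`-crossing: `k` distinct arcs
`(i₁,j₁),…,(i_k,j_k)` with `i₁<⋯<i_k<j₁<⋯<j_k`. -/
def HasKCrossing (k : ℕ) (A : Finset (ℕ × ℕ)) : Prop :=
  ∃ f : Fin k → ℕ × ℕ, (∀ i, f i ∈ A) ∧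
    (∀ i j : Fin k, i < j → (f i).1 < (f j).1) ∧
    (∀ i j : Fin k, i < j → (f i).2 < (f j).2) ∧
    (∀ i j : Fin k, (f i).1 < (f j).2)

/-- A `k`-noncrossing diagram over `n` vertices. -/
def IsKNoncrossing (k n : ℕ) (A : Finset (ℕ × ℕ)) : Prop :=
  IsDiagram n A ∧ ¬ HasKCrossing k A

/-- No isolated vertices among `1,…,n`. -/
def IsMatchingOn (n : ℕ) (A : Finset (ℕ × ℕ)) : Prop :=
  ∀ v : ℕ, 1 ≤ v → v ≤ n → ∃ a ∈ A, v = a.1 ∨ v = a.2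

/-- A diagram is modular if every arc has length at least four and every arc
lies in a stack of length at least two (i.e. has a parallel neighbour). -/
def IsModular (A : Finset (ℕ × ℕ)) : Prop :=
  ∀ a ∈ A, a.1 + 4 ≤ a.2 ∧ ((a.1 + 1, a.2 - 1) ∈ A ∨ (a.1 - 1, a.2 + 1) ∈ A)

/-- `Q_k(n)`: the number of modular `k`-noncrossing diagrams over `n` vertices. -/
noncomputable def Qk (k n : ℕ) : ℕ :=
  Nat.card {A : Finset (ℕ × ℕ) // IsKNoncrossing k n A ∧ IsModular A}

/-- `f_k(2n)`: the number of `k`-noncrossing matchings over `2n` vertices. -/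
noncomputable def fk (k n : ℕ) : ℕ :=
  Nat.card {A : Finset (ℕ × ℕ) // IsKNoncrossing k (2 * n) A ∧ IsMatchingOn (2 * n) A}

/-- A `V_k`-shape over `n` vertices: a `k`-noncrossing matching, all of whose
stacks have length exactly one. -/
def IsShape (k n : ℕ) (A : Finset (ℕ × ℕ)) : Prop :=
  IsKNoncrossing k n A ∧ IsMatchingOn n A ∧ ∀ a ∈ A, (a.1 + 1, a.2 - 1) ∉ A

def Is1Arc (a : ℕ × ℕ) : Prop := a.2 = a.1 + 1

def Is2Arc (a : ℕ × ℕ) : Prop := a.2 = a.1 + 2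

/-- Two arcs cross. -/
def Crosses (a b : ℕ × ℕ) : Prop :=
  (a.1 < b.1 ∧ b.1 < a.2 ∧ a.2 < b.2) ∨ (b.1 < a.1 ∧ a.1 < b.2 ∧ b.2 < a.2)

/-- The number of `1`-arcs (class `C₁`). -/
noncomputable def countC1 (A : Finset (ℕ × ℕ)) : ℕ := (A.filter Is1Arc).card

/-- The number of pairs of mutually crossing `2`-arcs (class `C₂`);
each unordered pair is counted once, via its left member. -/
noncomputable def countC2 (A : Finset (ℕ × ℕ)) : ℕ :=
  ((A ×ˢ A).filter (fun p => Is2Arc p.1 ∧ Is2Arc p.2 ∧ p.1.1 < p.2.1 ∧ Crosses p.1 p.2)).card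

/-- The number of `C₃`-elements: pairs `(α,β)` where `β` has length at least
three and `α` is the unique `2`-arc crossing `β`. -/
noncomputable def countC3 (A : Finset (ℕ × ℕ)) : ℕ :=
  (A.filter (fun b => b.1 + 3 ≤ b.2 ∧ ∃! a, a ∈ A ∧ Is2Arc a ∧ Crosses a b)).card

/-- The number of `C₄`-elements: triples `(α₁,β,α₂)` with `α₁ ≠ α₂` two
`2`-arcs both crossing `β`; counted via `β`. -/
noncomputable def countC4 (A : Finset (ℕ × ℕ)) : ℕ :=
  (A.filter (fun b => ∃ a₁ ∈ A, ∃ a₂ ∈ A, a₁ ≠ a₂ ∧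
      Is2Arc a₁ ∧ Is2Arc a₂ ∧ Crosses a₁ b ∧ Crosses a₂ b)).card

/-- `i_k(s,m)`: the number of `V_k`-shapes with `s` arcs, `m` of which are `1`-arcs. -/
noncomputable def ik2 (k s m : ℕ) : ℕ :=
  Nat.card {A : Finset (ℕ × ℕ) // IsShape k (2 * s) A ∧ A.card = s ∧ countC1 A = m}

/-- `i_k(s,u₁,u₂)`: `V_k`-shapes with `s` arcs, `u₁` `1`-arcs, `u₂` pairs of
mutually crossing `2`-arcs. -/
noncomputable def ik3 (k s u₁ u₂ : ℕ) : ℕ :=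
  Nat.card {A : Finset (ℕ × ℕ) //
    IsShape k (2 * s) A ∧ A.card = s ∧ countC1 A = u₁ ∧ countC2 A = u₂}

/-- `i_k(s,u₁,u₂,u₃,u₄)`: `V_k`-shapes with `s` arcs and `u_i` elements of class
`C_i`, `i = 1,2,3,4`.  -/
noncomputable def ik5 (k s u₁ u₂ u₃ u₄ : ℕ) : ℕ :=
  Nat.card {A : Finset (ℕ × ℕ) //
    IsShape k (2 * s) A ∧ A.card = s ∧ countC1 A = u₁ ∧ countC2 A = u₂ ∧
      countC3 A = u₃ ∧ countC4 A = u₄}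

/-- `i_k` with integer arguments, vanishing when some argument is negative. -/
noncomputable def ik5' (k : ℕ) (s u₁ u₂ u₃ u₄ : ℤ) : ℕ :=
  if 0 ≤ s ∧ 0 ≤ u₁ ∧ 0 ≤ u₂ ∧ 0 ≤ u₃ ∧ 0 ≤ u₄ then
    ik5 k s.toNat u₁.toNat u₂.toNat u₃.toNat u₄.toNat
  else 0

/-- `b` is strictly nested in `a`. -/
def Nested (a b : ℕ × ℕ) : Prop := a.1 < b.1 ∧ b.2 < a.2

/-- `b` is the successor of `a` inside a common stem of the diagram `A`:
`b` is nested in `a` and every arc of `A` nested in `a` is contained in or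
nested in (the stack of) `b`. -/
def StemStep (A : Finset (ℕ × ℕ)) (a b : ℕ × ℕ) : Prop :=
  a ∈ A ∧ b ∈ A ∧ Nested a b ∧ ∀ c ∈ A, Nested a c → b.1 ≤ c.1 ∧ c.2 ≤ b.2

/-- The outermost arcs of the stems of `A`. -/
noncomputable def stemTops (A : Finset (ℕ × ℕ)) : Finset (ℕ × ℕ) :=
  A.filter (fun b => ¬ ∃ a ∈ A, StemStep A a b)

/-- The vertices used by a set of arcs. -/
noncomputable def vertexSet (B : Finset (ℕ × ℕ)) : Finset ℕ :=
  B.image Prod.fst ∪ B.image Prod.snd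

/-- The rank (1-based) of `v` within the finite vertex set `V`. -/
noncomputable def rank (V : Finset ℕ) (v : ℕ) : ℕ := (V.filter (· ≤ v)).card

/-- The shape of a diagram: replace every stem by a single arc (its outermost
arc) and delete all isolated vertices, relabelling the remaining vertices in
increasing order. -/
noncomputable def shapeOf (A : Finset (ℕ × ℕ)) : Finset (ℕ × ℕ) :=
  (stemTops A).image
    (fun a => (rank (vertexSet (stemTops A)) a.1, rank (vertexSet (stemTops A)) a.2))

/-- The ordinary generating function `F_k(z) = ∑_{n≥0} f_k(2n) zⁿ`. -/
noncomputable def FkPS (k : ℕ) : PowerSeries ℚ := PowerSeries.mk fun n => (fk k n : ℚ)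

/-- Composition `F_k(g)` for a power series `g` with zero constant term:
the coefficient of `zⁿ` is `∑_{m=0}^{n} f_k(2m) [zⁿ] gᵐ` (higher powers of `g`
do not contribute since `g` has zero constant term). -/
noncomputable def FkComp (k : ℕ) (g : PowerSeries ℚ) : PowerSeries ℚ :=
  PowerSeries.mk fun n =>
    ∑ m ∈ Finset.range (n + 1), (fk k m : ℚ) * PowerSeries.coeff n (g ^ m)

/-- Composition `F_k(g)` for a multivariate power series `g` with zero constant
term: the coefficient of the monomial `d` is `∑_{m=0}^{|d|} f_k(2m) [d] gᵐ`. -/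
noncomputable def FkCompMv {σ : Type} (k : ℕ) (g : MvPowerSeries σ ℚ) :
    MvPowerSeries σ ℚ :=
  fun d => ∑ m ∈ Finset.range (d.sum (fun _ e => e) + 1),
    (fk k m : ℚ) * MvPowerSeries.coeff d (g ^ m)

/-- Formal partial derivative of a multivariate power series. -/
noncomputable def mvDeriv {σ : Type} (i : σ) (f : MvPowerSeries σ ℚ) :
    MvPowerSeries σ ℚ :=
  fun d => ((d i : ℚ) + 1) * MvPowerSeries.coeff (d + Finsupp.single i 1) f

-- ===== auxiliary development =====

/-- pairwise vertex-disjointness -/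
def Disj (A : Finset (ℕ × ℕ)) : Prop :=
  ∀ a ∈ A, ∀ b ∈ A, a ≠ b →
    a.1 ≠ b.1 ∧ a.1 ≠ b.2 ∧ a.2 ≠ b.1 ∧ a.2 ≠ b.2

/-- noncrossing as a pairwise condition -/
def NC (A : Finset (ℕ × ℕ)) : Prop :=
  ∀ a ∈ A, ∀ b ∈ A, ¬(a.1 < b.1 ∧ b.1 < a.2 ∧ a.2 < b.2)

lemma hasTwoCrossing_iff {A : Finset (ℕ × ℕ)} :
    HasKCrossing 2 A ↔ ∃ a ∈ A, ∃ b ∈ A, a.1 < b.1 ∧ b.1 < a.2 ∧ a.2 < b.2 := by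
  constructor
  · rintro ⟨f, hf, h1, h2, h3⟩
    exact ⟨f 0, hf 0, f 1, hf 1, h1 0 1 (by decide), h3 1 0, h2 0 1 (by decide)⟩
  · rintro ⟨a, ha, b, hb, hab1, hab2, hab3⟩
    refine ⟨![a, b], ?_, ?_, ?_, ?_⟩
    · intro i; fin_cases i <;> simpa
    · intro i j hij; fin_cases i <;> fin_cases j <;> simp_all <;> omega
    · intro i j hij; fin_cases i <;> fin_cases j <;> simp_all <;> omega
    · intro i j; fin_cases i <;> fin_cases j <;> simp <;> omega

lemma isKNoncrossing_two_iff {n : ℕ} {A : Finset (ℕ × ℕ)} :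
    IsKNoncrossing 2 n A ↔ IsDiagram n A ∧ NC A := by
  rw [IsKNoncrossing, hasTwoCrossing_iff]
  unfold NC
  push_neg
  tauto

/-- the universe of possible arcs -/
def U (n : ℕ) : Finset (ℕ × ℕ) := Finset.Icc 1 n ×ˢ Finset.Icc 1 n

noncomputable def DS (n : ℕ) : Finset (Finset (ℕ × ℕ)) :=
  (U n).powerset.filter (fun A => IsKNoncrossing 2 n A ∧ IsModular A)

noncomputable def DW (n : ℕ) : Finset (Finset (ℕ × ℕ)) :=
  (DS n).filter (fun A => (1, n) ∈ A)

noncomputable def DX (n : ℕ) : Finset (Finset (ℕ × ℕ)) :=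
  (DS n).filter (fun A => (1, n) ∉ A)

noncomputable def DM (n : ℕ) : Finset (Finset (ℕ × ℕ)) :=
  (U n).powerset.filter (fun A => IsKNoncrossing 2 n A ∧ IsMatchingOn n A)

lemma nat_card_eq_filter_card {P : Finset (ℕ × ℕ) → Prop} [DecidablePred P]
    {Un : Finset (ℕ × ℕ)} (h : ∀ A, P A → A ⊆ Un) :
    Nat.card {A : Finset (ℕ × ℕ) // P A} = (Un.powerset.filter P).card := by
  rw [← Nat.card_eq_finsetCard]
  refine Nat.card_congr (Equiv.subtypeEquivRight fun A => ?_)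
  simp only [Finset.mem_filter, Finset.mem_powerset]
  exact ⟨fun hP => ⟨h A hP, hP⟩, fun x => x.2⟩

lemma diagram_subset_U {n : ℕ} {A : Finset (ℕ × ℕ)} (h : IsDiagram n A) : A ⊆ U n := by
  intro a ha
  obtain ⟨h1, h2, h3⟩ := h.1 a ha
  simp only [U, Finset.mem_product, Finset.mem_Icc]
  omega

lemma Qk_eq_card_DS (n : ℕ) : Qk 2 n = (DS n).card := by
  rw [Qk, DS]
  exact nat_card_eq_filter_card
    (P := fun A => IsKNoncrossing 2 n A ∧ IsModular A)
    (fun A hA => diagram_subset_U hA.1.1)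

lemma fk_eq_card_DM (n : ℕ) : fk 2 n = (DM (2 * n)).card := by
  rw [fk, DM]
  exact nat_card_eq_filter_card
    (P := fun A => IsKNoncrossing 2 (2 * n) A ∧ IsMatchingOn (2 * n) A)
    (fun A hA => diagram_subset_U hA.1.1)

lemma mem_DS_iff {n : ℕ} {A : Finset (ℕ × ℕ)} :
    A ∈ DS n ↔ (∀ a ∈ A, 1 ≤ a.1 ∧ a.1 < a.2 ∧ a.2 ≤ n) ∧ Disj A ∧ NC A ∧ IsModular A := by
  rw [DS, Finset.mem_filter, Finset.mem_powerset, isKNoncrossing_two_iff]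
  constructor
  · rintro ⟨_, ⟨⟨h1, h2⟩, h3⟩, h4⟩; exact ⟨h1, h2, h3, h4⟩
  · rintro ⟨h1, h2, h3, h4⟩
    exact ⟨diagram_subset_U ⟨h1, h2⟩, ⟨⟨h1, h2⟩, h3⟩, h4⟩

lemma mem_DM_iff {n : ℕ} {A : Finset (ℕ × ℕ)} :
    A ∈ DM n ↔ (∀ a ∈ A, 1 ≤ a.1 ∧ a.1 < a.2 ∧ a.2 ≤ n) ∧ Disj A ∧ NC A ∧ IsMatchingOn n A := by
  rw [DM, Finset.mem_filter, Finset.mem_powerset, isKNoncrossing_two_iff]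
  constructor
  · rintro ⟨_, ⟨⟨h1, h2⟩, h3⟩, h4⟩; exact ⟨h1, h2, h3, h4⟩
  · rintro ⟨h1, h2, h3, h4⟩
    exact ⟨diagram_subset_U ⟨h1, h2⟩, ⟨⟨h1, h2⟩, h3⟩, h4⟩

-- ===== shifts =====

def up (c : ℕ) (A : Finset (ℕ × ℕ)) : Finset (ℕ × ℕ) :=
  A.image (fun a => (a.1 + c, a.2 + c))

def down (c : ℕ) (A : Finset (ℕ × ℕ)) : Finset (ℕ × ℕ) :=
  A.image (fun a => (a.1 - c, a.2 - c))

lemma mem_up {c : ℕ} {A : Finset (ℕ × ℕ)} {x y : ℕ} :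
    (x, y) ∈ up c A ↔ ∃ a ∈ A, a.1 + c = x ∧ a.2 + c = y := by
  simp [up, Prod.ext_iff]

lemma mem_up_iff {c : ℕ} {A : Finset (ℕ × ℕ)} {x y : ℕ} :
    (x + c, y + c) ∈ up c A ↔ (x, y) ∈ A := by
  rw [mem_up]
  constructor
  · rintro ⟨a, ha, h1, h2⟩
    have : a = (x, y) := Prod.ext (by omega) (by omega)
    rwa [this] at ha
  · intro h; exact ⟨(x, y), h, rfl, rfl⟩

lemma down_up (c : ℕ) (A : Finset (ℕ × ℕ)) : down c (up c A) = A := by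
  rw [down, up, Finset.image_image]
  have : ((fun a : ℕ × ℕ => (a.1 - c, a.2 - c)) ∘ fun a : ℕ × ℕ => (a.1 + c, a.2 + c)) = id := by
    funext a; simp
  rw [this, Finset.image_id]

lemma mem_down_iff {c : ℕ} {A : Finset (ℕ × ℕ)} {x y : ℕ}
    (h : ∀ a ∈ A, c + 1 ≤ a.1 ∧ a.1 < a.2) :
    (x, y) ∈ down c A ↔ (x + c, y + c) ∈ A := by
  constructor
  · rintro hm
    simp only [down, Finset.mem_image, Prod.ext_iff] at hm
    obtain ⟨a, ha, h1, h2⟩ := hm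
    have := h a ha
    have : a = (x + c, y + c) := Prod.ext (by simp; omega) (by simp; omega)
    rwa [this] at ha
  · intro hm
    have := h _ hm
    simp only [down, Finset.mem_image]
    exact ⟨(x + c, y + c), hm, by simp [Prod.ext_iff]⟩

lemma up_down {c : ℕ} {A : Finset (ℕ × ℕ)}
    (h : ∀ a ∈ A, c + 1 ≤ a.1 ∧ a.1 < a.2) : up c (down c A) = A := by
  ext ⟨x, y⟩
  rw [mem_up]
  constructor
  · rintro ⟨a, ha, h1, h2⟩
    rw [down, Finset.mem_image] at ha
    obtain ⟨b, hb, hba⟩ := ha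
    have hb2 := h b hb
    have hxy : b = (x, y) := by
      have e1 : b.1 - c + c = x := by rw [← hba] at h1; exact h1
      have e2 : b.2 - c + c = y := by rw [← hba] at h2; exact h2
      exact Prod.ext (by omega) (by omega)
    rwa [hxy] at hb
  · intro hm
    have hb := h _ hm
    refine ⟨(x - c, y - c), ?_, by omega, by omega⟩
    rw [down, Finset.mem_image]
    exact ⟨(x, y), hm, rfl⟩

lemma up_mem {c : ℕ} {B : Finset (ℕ × ℕ)} (b : ℕ × ℕ) (hb : b ∈ B) :
    (b.1 + c, b.2 + c) ∈ up c B :=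
  Finset.mem_image_of_mem _ hb

-- ===== transfer lemmas =====

lemma mem_down_elim {c : ℕ} {A : Finset (ℕ × ℕ)} {p : ℕ × ℕ} (hp : p ∈ down c A) :
    ∃ a ∈ A, a.1 - c = p.1 ∧ a.2 - c = p.2 := by
  simp only [down, Finset.mem_image] at hp
  obtain ⟨a, ha, rfl⟩ := hp
  exact ⟨a, ha, rfl, rfl⟩

lemma mem_up_elim {c : ℕ} {B : Finset (ℕ × ℕ)} {p : ℕ × ℕ} (hp : p ∈ up c B) :
    ∃ b ∈ B, b.1 + c = p.1 ∧ b.2 + c = p.2 := by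
  simp only [up, Finset.mem_image] at hp
  obtain ⟨a, ha, rfl⟩ := hp
  exact ⟨a, ha, rfl, rfl⟩

lemma down_mem_DS {c t : ℕ} {A : Finset (ℕ × ℕ)}
    (hwin : ∀ a ∈ A, c + 1 ≤ a.1 ∧ a.1 < a.2 ∧ a.2 ≤ c + t)
    (hdisj : Disj A) (hnc : NC A) (hmod : IsModular A) :
    down c A ∈ DS t := by
  rw [mem_DS_iff]
  refine ⟨?_, ?_, ?_, ?_⟩
  · intro p hp
    obtain ⟨a, ha, e1, e2⟩ := mem_down_elim hp
    have := hwin a ha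
    omega
  · intro p hp q hq hpq
    obtain ⟨a, ha, ea1, ea2⟩ := mem_down_elim hp
    obtain ⟨b, hb, eb1, eb2⟩ := mem_down_elim hq
    have ha' := hwin a ha; have hb' := hwin b hb
    have hab : a ≠ b := by
      rintro rfl
      exact hpq (Prod.ext (by omega) (by omega))
    have := hdisj a ha b hb hab
    exact ⟨by omega, by omega, by omega, by omega⟩
  · intro p hp q hq
    obtain ⟨a, ha, ea1, ea2⟩ := mem_down_elim hp
    obtain ⟨b, hb, eb1, eb2⟩ := mem_down_elim hq
    have ha' := hwin a ha; have hb' := hwin b hb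
    have := hnc a ha b hb
    omega
  · intro p hp
    obtain ⟨a, ha, ea1, ea2⟩ := mem_down_elim hp
    have ha' := hwin a ha
    obtain ⟨hlen, hwit⟩ := hmod a ha
    refine ⟨by omega, ?_⟩
    rcases hwit with h | h
    · left
      simp only [down, Finset.mem_image]
      exact ⟨(a.1 + 1, a.2 - 1), h, Prod.ext (by simp; omega) (by simp; omega)⟩
    · right
      have hb' := hwin _ h
      simp only [down, Finset.mem_image]
      exact ⟨(a.1 - 1, a.2 + 1), h, Prod.ext (by simp; omega) (by simp; omega)⟩

lemma up_win {c t : ℕ} {B : Finset (ℕ × ℕ)}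
    (h : ∀ a ∈ B, 1 ≤ a.1 ∧ a.1 < a.2 ∧ a.2 ≤ t) :
    ∀ p ∈ up c B, c + 1 ≤ p.1 ∧ p.1 < p.2 ∧ p.2 ≤ c + t := by
  intro p hp
  obtain ⟨b, hb, e1, e2⟩ := mem_up_elim hp
  have := h b hb
  omega

lemma up_disj {c : ℕ} {B : Finset (ℕ × ℕ)} (h : Disj B) : Disj (up c B) := by
  intro p hp q hq hpq
  obtain ⟨a, ha, ea1, ea2⟩ := mem_up_elim hp
  obtain ⟨b, hb, eb1, eb2⟩ := mem_up_elim hq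
  have hab : a ≠ b := by
    rintro rfl
    exact hpq (Prod.ext (by omega) (by omega))
  have := h a ha b hb hab
  exact ⟨by omega, by omega, by omega, by omega⟩

lemma up_nc {c : ℕ} {B : Finset (ℕ × ℕ)} (h : NC B) : NC (up c B) := by
  intro p hp q hq
  obtain ⟨a, ha, ea1, ea2⟩ := mem_up_elim hp
  obtain ⟨b, hb, eb1, eb2⟩ := mem_up_elim hq
  have := h a ha b hb
  omega

lemma up_mod {c : ℕ} {B : Finset (ℕ × ℕ)} (hb : ∀ a ∈ B, 1 ≤ a.1)
    (h : IsModular B) : IsModular (up c B) := by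
  intro p hp
  obtain ⟨a, ha, ea1, ea2⟩ := mem_up_elim hp
  have ha1 := hb a ha
  obtain ⟨hlen, hwit⟩ := h a ha
  refine ⟨by omega, ?_⟩
  rcases hwit with hw | hw
  · left
    simp only [up, Finset.mem_image]
    exact ⟨(a.1 + 1, a.2 - 1), hw, Prod.ext (by simp; omega) (by simp; omega)⟩
  · right
    have := hb _ hw
    simp only [up, Finset.mem_image]
    exact ⟨(a.1 - 1, a.2 + 1), hw, Prod.ext (by simp; omega) (by simp; omega)⟩

-- ===== small cases =====

lemma empty_mem_DS (n : ℕ) : ∅ ∈ DS n := by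
  rw [mem_DS_iff]
  refine ⟨?_, ?_, ?_, ?_⟩ <;> intro a ha <;> simp at ha

lemma DS_small {n : ℕ} (hn : n ≤ 4) : DS n = {∅} := by
  ext A
  simp only [Finset.mem_singleton]
  constructor
  · intro hA
    rw [mem_DS_iff] at hA
    obtain ⟨hw, -, -, hm⟩ := hA
    rw [Finset.eq_empty_iff_forall_notMem]
    intro a ha
    have := hw a ha
    have := (hm a ha).1
    omega
  · rintro rfl; exact empty_mem_DS n

lemma DW_small {m : ℕ} (hm : m ≤ 6) : DW m = ∅ := by
  rw [Finset.eq_empty_iff_forall_notMem]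
  intro A hA
  rw [DW, Finset.mem_filter] at hA
  obtain ⟨hA, h1⟩ := hA
  rw [mem_DS_iff] at hA
  obtain ⟨hw, -, -, hmod⟩ := hA
  obtain ⟨hlen, hwit⟩ := hmod _ h1
  simp only at hlen hwit
  rcases hwit with hw2 | hw2
  · have := (hmod _ hw2).1
    simp only at this
    have := hw _ hw2
    omega
  · have := hw _ hw2
    simp at this

lemma DM_zero : DM 0 = {∅} := by
  ext A
  simp only [Finset.mem_singleton, mem_DM_iff]
  constructor
  · rintro ⟨hw, -, -, -⟩
    rw [Finset.eq_empty_iff_forall_notMem]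
    intro a ha
    have := hw a ha
    omega
  · rintro rfl
    refine ⟨?_, ?_, ?_, ?_⟩
    · intro a ha; simp at ha
    · intro a ha; simp at ha
    · intro a ha; simp at ha
    · intro v h1 h0; omega

lemma card_split (t : ℕ) : (DS t).card = (DW t).card + (DX t).card := by
  rw [DW, DX]
  exact (Finset.card_filter_add_card_filter_not _).symm

-- ===== insert helpers =====

lemma mem_DW_iff {n : ℕ} {A : Finset (ℕ × ℕ)} :
    A ∈ DW n ↔ A ∈ DS n ∧ (1, n) ∈ A := Finset.mem_filter

lemma mem_DX_iff {n : ℕ} {A : Finset (ℕ × ℕ)} :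
    A ∈ DX n ↔ A ∈ DS n ∧ (1, n) ∉ A := Finset.mem_filter

lemma disj_insert {A : Finset (ℕ × ℕ)} {a : ℕ × ℕ} (hd : Disj A)
    (h : ∀ b ∈ A, a.1 ≠ b.1 ∧ a.1 ≠ b.2 ∧ a.2 ≠ b.1 ∧ a.2 ≠ b.2) :
    Disj (insert a A) := by
  intro p hp q hq hpq
  rcases Finset.mem_insert.1 hp with h1 | h1 <;> rcases Finset.mem_insert.1 hq with h2 | h2
  · exact absurd (h1.trans h2.symm) hpq
  · subst h1; exact h q h2
  · subst h2
    obtain ⟨u1, u2, u3, u4⟩ := h p h1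
    exact ⟨u1.symm, u3.symm, u2.symm, u4.symm⟩
  · exact hd p h1 q h2 hpq

lemma nc_insert {A : Finset (ℕ × ℕ)} {a : ℕ × ℕ} (hnc : NC A) (ha : a.1 < a.2)
    (h1 : ∀ b ∈ A, ¬(a.1 < b.1 ∧ b.1 < a.2 ∧ a.2 < b.2))
    (h2 : ∀ b ∈ A, ¬(b.1 < a.1 ∧ a.1 < b.2 ∧ b.2 < a.2)) :
    NC (insert a A) := by
  intro p hp q hq
  rcases Finset.mem_insert.1 hp with hu | hu <;> rcases Finset.mem_insert.1 hq with hv | hv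
  · subst hu; subst hv; omega
  · subst hu; exact h1 q hv
  · subst hv; exact h2 p hu
  · exact hnc p hu q hv

lemma disj_mono {A B : Finset (ℕ × ℕ)} (h : B ⊆ A) (hd : Disj A) : Disj B :=
  fun p hp q hq hpq => hd p (h hp) q (h hq) hpq

lemma nc_mono {A B : Finset (ℕ × ℕ)} (h : B ⊆ A) (hd : NC A) : NC B :=
  fun p hp q hq => hd p (h hp) q (h hq)

lemma DW_second {m : ℕ} {A : Finset (ℕ × ℕ)} (hA : A ∈ DW m) : (2, m - 1) ∈ A := by
  obtain ⟨hS, h1⟩ := mem_DW_iff.1 hA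
  rw [mem_DS_iff] at hS
  obtain ⟨hw, -, -, hmod⟩ := hS
  obtain ⟨-, hwit⟩ := hmod _ h1
  rcases hwit with h | h
  · exact h
  · have := hw _ h
    simp at this

lemma DW_window {m : ℕ} {A : Finset (ℕ × ℕ)} (hA : A ∈ DW m) :
    ∀ a ∈ A, a ≠ (1, m) → 2 ≤ a.1 ∧ a.2 ≤ m - 1 := by
  obtain ⟨hS, h1⟩ := mem_DW_iff.1 hA
  rw [mem_DS_iff] at hS
  obtain ⟨hw, hd, -, -⟩ := hS
  intro a ha hne
  obtain ⟨u1, u2, u3, u4⟩ := hd a ha _ h1 hne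
  have := hw a ha
  have := hw _ h1
  simp only at u1 u2 u3 u4 ⊢
  omega

lemma DW_window2 {m : ℕ} {A : Finset (ℕ × ℕ)} (hA : A ∈ DW m) :
    ∀ a ∈ A, a ≠ (1, m) → a ≠ (2, m - 1) → 3 ≤ a.1 ∧ a.2 ≤ m - 2 := by
  obtain ⟨hS, h1⟩ := mem_DW_iff.1 hA
  have h2 := DW_second hA
  rw [mem_DS_iff] at hS
  obtain ⟨hw, hd, -, -⟩ := hS
  intro a ha hne1 hne2
  obtain ⟨u1, u2, u3, u4⟩ := hd a ha _ h1 hne1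
  obtain ⟨v1, v2, v3, v4⟩ := hd a ha _ h2 hne2
  have := hw a ha
  have := hw _ h1
  have := hw _ h2
  simp only at u1 u2 u3 u4 v1 v2 v3 v4 ⊢
  omega

-- ===== the W recursion =====

lemma W_rec_part1 (m : ℕ) :
    ((DW (m + 7)).filter (fun A => (3, m + 5) ∈ A)).card = (DW (m + 5)).card := by
  refine Finset.card_nbij' (fun A => down 1 (A.erase (1, m + 7)))
    (fun B => insert (1, m + 7) (up 1 B)) ?_ ?_ ?_ ?_
  · intro A hA
    obtain ⟨hA, h3⟩ := Finset.mem_filter.1 hA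
    have hwd := DW_window hA
    have h2 := DW_second hA
    obtain ⟨hS, h1⟩ := mem_DW_iff.1 hA
    rw [mem_DS_iff] at hS
    obtain ⟨hw, hd, hnc, hmod⟩ := hS
    have herase : ∀ a ∈ A.erase (1, m + 7), 1 + 1 ≤ a.1 ∧ a.1 < a.2 ∧ a.2 ≤ 1 + (m + 5) := by
      intro a ha
      obtain ⟨hne, haA⟩ := Finset.mem_erase.1 ha
      have := hwd a haA hne
      have := hw a haA
      omega
    rw [Finset.mem_coe, mem_DW_iff]
    constructor
    · refine down_mem_DS herase (disj_mono (Finset.erase_subset _ _) hd)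
        (nc_mono (Finset.erase_subset _ _) hnc) ?_
      intro a ha
      obtain ⟨hne, haA⟩ := Finset.mem_erase.1 ha
      obtain ⟨hlen, hwit⟩ := hmod a haA
      refine ⟨hlen, ?_⟩
      rcases hwit with hwit | hwit
      · left
        refine Finset.mem_erase.2 ⟨?_, hwit⟩
        intro he
        rw [Prod.ext_iff] at he
        simp only at he
        have := hw a haA
        omega
      · by_cases hcase : a = (2, m + 6)
        · left
          subst hcase
          refine Finset.mem_erase.2 ⟨?_, ?_⟩
          · intro he; rw [Prod.ext_iff] at he; simp at he
          · simpa using h3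
        · right
          refine Finset.mem_erase.2 ⟨?_, hwit⟩
          intro he
          rw [Prod.ext_iff] at he
          simp only at he
          have haw := hwd a haA hne
          have := hw a haA
          apply hcase
          have : a.1 = 2 ∧ a.2 = m + 6 := by omega
          exact Prod.ext this.1 this.2
    · have : (2, m + 6) ∈ A.erase (1, m + 7) := by
        refine Finset.mem_erase.2 ⟨?_, ?_⟩
        · intro he; rw [Prod.ext_iff] at he; simp at he
        · simpa using h2
      have := (mem_down_iff (c := 1) (fun a ha => ⟨(herase a ha).1, (herase a ha).2.1⟩)
        (x := 1) (y := m + 5)).2 (by simpa using this)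
      exact this
  · intro B hB
    have h2B := DW_second hB
    obtain ⟨hS, h1B⟩ := mem_DW_iff.1 hB
    rw [mem_DS_iff] at hS
    obtain ⟨hw, hd, hnc, hmod⟩ := hS
    have hup := up_win (c := 1) hw
    rw [Finset.mem_coe, Finset.mem_filter]
    refine ⟨?_, ?_⟩
    · rw [mem_DW_iff]
      constructor
      · rw [mem_DS_iff]
        refine ⟨?_, ?_, ?_, ?_⟩
        · intro p hp
          rcases Finset.mem_insert.1 hp with hu | hu
          · subst hu
            show 1 ≤ 1 ∧ 1 < m + 7 ∧ m + 7 ≤ m + 7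
            omega
          · have := hup p hu; omega
        · refine disj_insert (up_disj hd) ?_
          intro b hb
          have := hup b hb
          simp only
          omega
        · refine nc_insert (up_nc hnc) (by simp) ?_ ?_
          · intro b hb; have := hup b hb; simp only; omega
          · intro b hb; have := hup b hb; simp only; omega
        · intro p hp
          rcases Finset.mem_insert.1 hp with hu | hu
          · subst hu
            refine ⟨by show 1 + 4 ≤ m + 7; omega, Or.inl ?_⟩
            simp only
            have : ((1:ℕ) + 1, m + 7 - 1) = (1 + 1, (m + 5) + 1) := by
              rw [Prod.ext_iff]; omega
            rw [this]
            exact Finset.mem_insert_of_mem (mem_up_iff.2 h1B)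
          · obtain ⟨hlen, hwit⟩ := up_mod (fun a ha => (hw a ha).1) hmod p hu
            refine ⟨hlen, ?_⟩
            rcases hwit with h | h
            · exact Or.inl (Finset.mem_insert_of_mem h)
            · exact Or.inr (Finset.mem_insert_of_mem h)
      · exact Finset.mem_insert_self _ _
    · have : ((1:ℕ) + 1 + 1, (m + 4) + 1) = (3, m + 5) := by rw [Prod.ext_iff]; omega
      have h24 : (2, m + 4) ∈ B := by
        have := DW_second hB
        simpa using this
      have : (3, m + 5) ∈ up 1 B := by
        rw [← this]
        exact (mem_up_iff (x := 1 + 1) (y := m + 4)).2 h24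
      exact Finset.mem_insert_of_mem this
  · intro A hA
    obtain ⟨hA, h3⟩ := Finset.mem_filter.1 hA
    have hwd := DW_window hA
    obtain ⟨hS, h1⟩ := mem_DW_iff.1 hA
    rw [mem_DS_iff] at hS
    obtain ⟨hw, hd, hnc, hmod⟩ := hS
    have hw2 : ∀ a ∈ A.erase (1, m + 7), 1 + 1 ≤ a.1 ∧ a.1 < a.2 := by
      intro a ha
      obtain ⟨hne, haA⟩ := Finset.mem_erase.1 ha
      have := hwd a haA hne
      have := hw a haA
      omega
    show insert (1, m + 7) (up 1 (down 1 (A.erase (1, m + 7)))) = A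
    rw [up_down hw2, Finset.insert_erase h1]
  · intro B hB
    obtain ⟨hS, h1B⟩ := mem_DW_iff.1 hB
    rw [mem_DS_iff] at hS
    obtain ⟨hw, -, -, -⟩ := hS
    have hnotmem : (1, m + 7) ∉ up 1 B := by
      intro h
      obtain ⟨b, hb, e1, e2⟩ := mem_up_elim h
      have := hw b hb
      simp only at e1 e2
      omega
    show down 1 ((insert (1, m + 7) (up 1 B)).erase (1, m + 7)) = B
    rw [Finset.erase_insert hnotmem, down_up]

lemma W_rec_part2 (m : ℕ) :
    ((DW (m + 7)).filter (fun A => ¬(3, m + 5) ∈ A)).card = (DX (m + 3)).card := by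
  refine Finset.card_nbij' (fun A => down 2 ((A.erase (1, m + 7)).erase (2, m + 6)))
    (fun C => insert (1, m + 7) (insert (2, m + 6) (up 2 C))) ?_ ?_ ?_ ?_
  · intro A hA
    obtain ⟨hA, h3⟩ := Finset.mem_filter.1 hA
    have hwd2 := DW_window2 hA
    have h2 : (2, m + 6) ∈ A := by
      have := DW_second hA
      have e : ((2 : ℕ), m + 7 - 1) = (2, m + 6) := by rw [Prod.ext_iff]; omega
      rwa [e] at this
    obtain ⟨hS, h1⟩ := mem_DW_iff.1 hA
    rw [mem_DS_iff] at hS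
    obtain ⟨hw, hd, hnc, hmod⟩ := hS
    have hSsub : ((A.erase (1, m + 7)).erase (2, m + 6)) ⊆ A :=
      (Finset.erase_subset _ _).trans (Finset.erase_subset _ _)
    have hmemS : ∀ a ∈ (A.erase (1, m + 7)).erase (2, m + 6),
        a ∈ A ∧ a ≠ (1, m + 7) ∧ a ≠ (2, m + 6) := by
      intro a ha
      obtain ⟨hne2, ha⟩ := Finset.mem_erase.1 ha
      obtain ⟨hne1, ha⟩ := Finset.mem_erase.1 ha
      exact ⟨ha, hne1, hne2⟩
    have herase : ∀ a ∈ (A.erase (1, m + 7)).erase (2, m + 6),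
        2 + 1 ≤ a.1 ∧ a.1 < a.2 ∧ a.2 ≤ 2 + (m + 3) := by
      intro a ha
      obtain ⟨haA, hne1, hne2⟩ := hmemS a ha
      have hq := hwd2 a haA hne1 (by
        intro he
        apply hne2
        rw [he, Prod.ext_iff]
        constructor <;> simp <;> omega)
      have := hw a haA
      omega
    rw [Finset.mem_coe, mem_DX_iff]
    constructor
    · refine down_mem_DS herase (disj_mono hSsub hd) (nc_mono hSsub hnc) ?_
      intro a ha
      obtain ⟨haA, hne1, hne2⟩ := hmemS a ha
      obtain ⟨hlen, hwit⟩ := hmod a haA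
      have haw := herase a ha
      refine ⟨hlen, ?_⟩
      rcases hwit with hwit | hwit
      · left
        refine Finset.mem_erase.2 ⟨?_, Finset.mem_erase.2 ⟨?_, hwit⟩⟩
        · intro he; rw [Prod.ext_iff] at he; simp only at he; omega
        · intro he; rw [Prod.ext_iff] at he; simp only at he; omega
      · right
        refine Finset.mem_erase.2 ⟨?_, Finset.mem_erase.2 ⟨?_, hwit⟩⟩
        · intro he
          rw [Prod.ext_iff] at he; simp only at he
          apply h3
          have : a = (3, m + 5) := Prod.ext (by omega) (by omega)
          rwa [this] at haA
        · intro he; rw [Prod.ext_iff] at he; simp only at he; omega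
    · intro hmem
      have hwin : ∀ a ∈ (A.erase (1, m + 7)).erase (2, m + 6), 2 + 1 ≤ a.1 ∧ a.1 < a.2 :=
        fun a ha => ⟨(herase a ha).1, (herase a ha).2.1⟩
      have := (mem_down_iff hwin).1 hmem
      exact h3 (hSsub this)
  · intro C hC
    obtain ⟨hS, h13⟩ := mem_DX_iff.1 hC
    rw [mem_DS_iff] at hS
    obtain ⟨hw, hd, hnc, hmod⟩ := hS
    have hup := up_win (c := 2) hw
    have hnot3 : (3, m + 5) ∉ up 2 C := by
      intro h
      obtain ⟨b, hb, e1, e2⟩ := mem_up_elim h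
      apply h13
      have : b = (1, m + 3) := Prod.ext (by omega) (by omega)
      rwa [this] at hb
    rw [Finset.mem_coe, Finset.mem_filter]
    constructor
    · rw [mem_DW_iff]
      constructor
      · rw [mem_DS_iff]
        refine ⟨?_, ?_, ?_, ?_⟩
        · intro p hp
          rcases Finset.mem_insert.1 hp with hu | hu
          · subst hu; show 1 ≤ 1 ∧ 1 < m + 7 ∧ m + 7 ≤ m + 7; omega
          rcases Finset.mem_insert.1 hu with hv | hv
          · subst hv; show 1 ≤ 2 ∧ 2 < m + 6 ∧ m + 6 ≤ m + 7; omega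
          · have := hup p hv; omega
        · refine disj_insert (disj_insert (up_disj hd) ?_) ?_
          · intro b hb; have := hup b hb; simp only; omega
          · intro b hb
            rcases Finset.mem_insert.1 hb with hv | hv
            · subst hv; show (1:ℕ) ≠ 2 ∧ (1:ℕ) ≠ m + 6 ∧ m + 7 ≠ 2 ∧ m + 7 ≠ m + 6; omega
            · have := hup b hv; simp only; omega
        · refine nc_insert (nc_insert (up_nc hnc) (by show 2 < m + 6; omega) ?_ ?_)
            (by show 1 < m + 7; omega) ?_ ?_
          · intro b hb; have := hup b hb; simp only; omega
          · intro b hb; have := hup b hb; simp only; omega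
          · intro b hb
            rcases Finset.mem_insert.1 hb with hv | hv
            · subst hv; show ¬(1 < 2 ∧ 2 < m + 7 ∧ m + 7 < m + 6); omega
            · have := hup b hv; simp only; omega
          · intro b hb
            rcases Finset.mem_insert.1 hb with hv | hv
            · subst hv; show ¬(2 < 1 ∧ 1 < m + 6 ∧ m + 6 < m + 7); omega
            · have := hup b hv; simp only; omega
        · intro p hp
          rcases Finset.mem_insert.1 hp with hu | hu
          · subst hu
            refine ⟨by show 1 + 4 ≤ m + 7; omega, Or.inl ?_⟩
            have e : ((1:ℕ) + 1, m + 7 - 1) = (2, m + 6) := by rw [Prod.ext_iff]; omega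
            rw [e]
            exact Finset.mem_insert_of_mem (Finset.mem_insert_self _ _)
          rcases Finset.mem_insert.1 hu with hv | hv
          · subst hv
            refine ⟨by show 2 + 4 ≤ m + 6; omega, Or.inr ?_⟩
            have e : ((2:ℕ) - 1, m + 6 + 1) = (1, m + 7) := by rw [Prod.ext_iff]; omega
            rw [e]
            exact Finset.mem_insert_self _ _
          · obtain ⟨hlen, hwit⟩ := up_mod (fun a ha => (hw a ha).1) hmod p hv
            refine ⟨hlen, ?_⟩
            rcases hwit with h | h
            · exact Or.inl (Finset.mem_insert_of_mem (Finset.mem_insert_of_mem h))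
            · exact Or.inr (Finset.mem_insert_of_mem (Finset.mem_insert_of_mem h))
      · exact Finset.mem_insert_self _ _
    · intro hmem
      rcases Finset.mem_insert.1 hmem with hu | hu
      · rw [Prod.ext_iff] at hu; simp only at hu; omega
      rcases Finset.mem_insert.1 hu with hv | hv
      · rw [Prod.ext_iff] at hv; simp only at hv; omega
      · exact hnot3 hv
  · intro A hA
    obtain ⟨hA, h3⟩ := Finset.mem_filter.1 hA
    have hwd2 := DW_window2 hA
    have h2 : (2, m + 6) ∈ A := by
      have := DW_second hA
      have e : ((2 : ℕ), m + 7 - 1) = (2, m + 6) := by rw [Prod.ext_iff]; omega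
      rwa [e] at this
    obtain ⟨hS, h1⟩ := mem_DW_iff.1 hA
    rw [mem_DS_iff] at hS
    obtain ⟨hw, hd, -, -⟩ := hS
    have hwin : ∀ a ∈ (A.erase (1, m + 7)).erase (2, m + 6), 2 + 1 ≤ a.1 ∧ a.1 < a.2 := by
      intro a ha
      obtain ⟨hne2, ha'⟩ := Finset.mem_erase.1 ha
      obtain ⟨hne1, haA⟩ := Finset.mem_erase.1 ha'
      have hq := hwd2 a haA hne1 (by
        intro he
        apply hne2
        rw [he, Prod.ext_iff]
        constructor <;> simp <;> omega)
      have := hw a haA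
      omega
    show insert (1, m + 7) (insert (2, m + 6)
      (up 2 (down 2 ((A.erase (1, m + 7)).erase (2, m + 6))))) = A
    rw [up_down hwin]
    have h2' : (2, m + 6) ∈ A.erase (1, m + 7) := by
      refine Finset.mem_erase.2 ⟨?_, h2⟩
      intro he; rw [Prod.ext_iff] at he; simp only at he; omega
    rw [Finset.insert_erase h2', Finset.insert_erase h1]
  · intro C hC
    obtain ⟨hS, h13⟩ := mem_DX_iff.1 hC
    rw [mem_DS_iff] at hS
    obtain ⟨hw, -, -, -⟩ := hS
    have hnm1 : (1, m + 7) ∉ up 2 C := by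
      intro h
      obtain ⟨b, hb, e1, e2⟩ := mem_up_elim h
      have := hw b hb
      omega
    have hnm2 : (2, m + 6) ∉ up 2 C := by
      intro h
      obtain ⟨b, hb, e1, e2⟩ := mem_up_elim h
      have := hw b hb
      omega
    have hnm1' : (1, m + 7) ∉ insert (2, m + 6) (up 2 C) := by
      intro h
      rcases Finset.mem_insert.1 h with hu | hu
      · rw [Prod.ext_iff] at hu; simp only at hu; omega
      · exact hnm1 hu
    show down 2 (((insert (1, m + 7) (insert (2, m + 6) (up 2 C))).erase (1, m + 7)).erase
      (2, m + 6)) = C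
    rw [Finset.erase_insert hnm1', Finset.erase_insert hnm2, down_up]

lemma W_rec (m : ℕ) : (DW (m + 7)).card = (DW (m + 5)).card + (DX (m + 3)).card := by
  rw [← W_rec_part1 m, ← W_rec_part2 m]
  exact (Finset.card_filter_add_card_filter_not (p := fun A => (3, m + 5) ∈ A)).symm

-- ===== the S recursion: block bijection =====

lemma block_dichotomy {c d : ℕ} {A : Finset (ℕ × ℕ)} (hA : A ∈ DS (c + d + 1))
    (harc : (c + 1, c + d + 1) ∈ A) :
    ∀ a ∈ A, a.2 ≤ c ∨ c + 1 ≤ a.1 := by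
  rw [mem_DS_iff] at hA
  obtain ⟨hw, hd, hnc, -⟩ := hA
  intro a ha
  by_cases he : a = (c + 1, c + d + 1)
  · subst he; right; simp
  · obtain ⟨u1, u2, u3, u4⟩ := hd a ha _ harc he
    simp only at u1 u2 u3 u4
    have hb := hw a ha
    have := hnc a ha _ harc
    simp only at this
    omega

lemma block_card (c d : ℕ) :
    ((DS (c + d + 1)).filter (fun A => (c + 1, c + d + 1) ∈ A)).card
      = (DS c).card * (DW (d + 1)).card := by
  rw [← Finset.card_product]
  refine Finset.card_nbij'
    (fun A => (A.filter (fun a => a.2 ≤ c), down c (A.filter (fun a => c + 1 ≤ a.1))))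
    (fun BC => BC.1 ∪ up c BC.2) ?_ ?_ ?_ ?_
  · intro A hA
    obtain ⟨hA, harc⟩ := Finset.mem_filter.1 hA
    have hdich := block_dichotomy hA harc
    have hd1 : (1 : ℕ) ≤ d := by
      rw [mem_DS_iff] at hA
      have := hA.1 _ harc
      simp only at this
      omega
    rw [mem_DS_iff] at hA
    obtain ⟨hw, hd, hnc, hmod⟩ := hA
    rw [Finset.mem_coe, Finset.mem_product]
    constructor
    · rw [mem_DS_iff]
      refine ⟨?_, disj_mono (Finset.filter_subset _ _) hd,
        nc_mono (Finset.filter_subset _ _) hnc, ?_⟩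
      · intro a ha
        obtain ⟨haA, hf⟩ := Finset.mem_filter.1 ha
        have := hw a haA
        omega
      · intro a ha
        obtain ⟨haA, hf⟩ := Finset.mem_filter.1 ha
        obtain ⟨hlen, hwit⟩ := hmod a haA
        refine ⟨hlen, ?_⟩
        rcases hwit with h | h
        · exact Or.inl (Finset.mem_filter.2 ⟨h, by show a.2 - 1 ≤ c; omega⟩)
        · by_cases hc : a.2 + 1 ≤ c
          · exact Or.inr (Finset.mem_filter.2 ⟨h, by show a.2 + 1 ≤ c; omega⟩)
          · exfalso
            have hne : (a.1 - 1, a.2 + 1) ≠ (c + 1, c + d + 1) := by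
              intro he; rw [Prod.ext_iff] at he; simp only at he; omega
            obtain ⟨-, -, v3, -⟩ := hd _ h _ harc hne
            simp only at v3
            omega
    · have hwinR : ∀ a ∈ A.filter (fun a => c + 1 ≤ a.1),
          c + 1 ≤ a.1 ∧ a.1 < a.2 ∧ a.2 ≤ c + (d + 1) := by
        intro a ha
        obtain ⟨haA, hf⟩ := Finset.mem_filter.1 ha
        have := hw a haA
        omega
      rw [mem_DW_iff]
      constructor
      · refine down_mem_DS hwinR (disj_mono (Finset.filter_subset _ _) hd)
          (nc_mono (Finset.filter_subset _ _) hnc) ?_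
        intro a ha
        obtain ⟨haA, hf⟩ := Finset.mem_filter.1 ha
        obtain ⟨hlen, hwit⟩ := hmod a haA
        refine ⟨hlen, ?_⟩
        rcases hwit with h | h
        · exact Or.inl (Finset.mem_filter.2 ⟨h, by show c + 1 ≤ a.1 + 1; omega⟩)
        · by_cases hc : c + 1 ≤ a.1 - 1
          · exact Or.inr (Finset.mem_filter.2 ⟨h, hc⟩)
          · exfalso
            have ha1 : a.1 = c + 1 := by omega
            have hae : a = (c + 1, c + d + 1) := by
              by_contra hne
              obtain ⟨v1, -, -, -⟩ := hd a haA _ harc hne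
              exact v1 ha1
            have ha2 : a.2 = c + d + 1 := by rw [hae]
            have b3 : a.2 + 1 ≤ c + d + 1 := (hw _ h).2.2
            omega
      · have hmem : ((1 : ℕ) + c, (d + 1) + c) ∈ A.filter (fun a => c + 1 ≤ a.1) := by
          have he : ((1 : ℕ) + c, d + 1 + c) = (c + 1, c + d + 1) := by
            rw [Prod.ext_iff]; constructor <;> simp <;> omega
          rw [he]
          exact Finset.mem_filter.2 ⟨harc, le_rfl⟩
        exact (mem_down_iff (fun a ha => ⟨(hwinR a ha).1, (hwinR a ha).2.1⟩)).2 hmem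
  · intro BC hBC
    obtain ⟨hB, hC⟩ := Finset.mem_product.1 hBC
    obtain ⟨hCS, hC1⟩ := mem_DW_iff.1 hC
    rw [mem_DS_iff] at hB hCS
    obtain ⟨hwB, hdB, hncB, hmodB⟩ := hB
    obtain ⟨hwC, hdC, hncC, hmodC⟩ := hCS
    have hupw := up_win (c := c) hwC
    have harc : (c + 1, c + d + 1) ∈ BC.1 ∪ up c BC.2 := by
      have he : ((1 : ℕ) + c, (d + 1) + c) = (c + 1, c + d + 1) := by
        rw [Prod.ext_iff]; constructor <;> simp <;> omega
      refine Finset.mem_union_right _ ?_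
      rw [← he]
      exact mem_up_iff.2 hC1
    rw [Finset.mem_coe, Finset.mem_filter]
    refine ⟨?_, harc⟩
    rw [mem_DS_iff]
    refine ⟨?_, ?_, ?_, ?_⟩
    · intro a ha
      rcases Finset.mem_union.1 ha with h | h
      · have := hwB a h; omega
      · have := hupw a h; omega
    · intro p hp q hq hpq
      rcases Finset.mem_union.1 hp with h1 | h1 <;> rcases Finset.mem_union.1 hq with h2 | h2
      · exact hdB p h1 q h2 hpq
      · have := hwB p h1; have := hupw q h2
        exact ⟨by omega, by omega, by omega, by omega⟩
      · have := hwB q h2; have := hupw p h1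
        exact ⟨by omega, by omega, by omega, by omega⟩
      · exact up_disj hdC p h1 q h2 hpq
    · intro p hp q hq
      rcases Finset.mem_union.1 hp with h1 | h1 <;> rcases Finset.mem_union.1 hq with h2 | h2
      · exact hncB p h1 q h2
      · have := hwB p h1; have := hupw q h2; omega
      · have := hwB q h2; have := hupw p h1; omega
      · exact up_nc hncC p h1 q h2
    · intro p hp
      rcases Finset.mem_union.1 hp with h1 | h1
      · obtain ⟨hlen, hwit⟩ := hmodB p h1
        exact ⟨hlen, hwit.imp (Finset.mem_union_left _) (Finset.mem_union_left _)⟩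
      · obtain ⟨hlen, hwit⟩ := up_mod (fun a ha => (hwC a ha).1) hmodC p h1
        exact ⟨hlen, hwit.imp (Finset.mem_union_right _) (Finset.mem_union_right _)⟩
  · intro A hA
    obtain ⟨hA', harc⟩ := Finset.mem_filter.1 hA
    have hdich := block_dichotomy hA' harc
    rw [mem_DS_iff] at hA'
    obtain ⟨hw, -, -, -⟩ := hA'
    have hwinR : ∀ a ∈ A.filter (fun a => c + 1 ≤ a.1), c + 1 ≤ a.1 ∧ a.1 < a.2 := by
      intro a ha
      obtain ⟨haA, hf⟩ := Finset.mem_filter.1 ha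
      have := hw a haA
      omega
    show A.filter (fun a => a.2 ≤ c) ∪ up c (down c (A.filter (fun a => c + 1 ≤ a.1))) = A
    rw [up_down hwinR]
    ext a
    simp only [Finset.mem_union, Finset.mem_filter]
    constructor
    · rintro (⟨h, -⟩ | ⟨h, -⟩) <;> exact h
    · intro ha
      rcases hdich a ha with h | h
      · exact Or.inl ⟨ha, h⟩
      · exact Or.inr ⟨ha, h⟩
  · intro BC hBC
    obtain ⟨hB, hC⟩ := Finset.mem_product.1 hBC
    obtain ⟨hCS, hC1⟩ := mem_DW_iff.1 hC
    rw [mem_DS_iff] at hB hCS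
    obtain ⟨hwB, -, -, -⟩ := hB
    obtain ⟨hwC, -, -, -⟩ := hCS
    have hupw := up_win (c := c) hwC
    have e1 : (BC.1 ∪ up c BC.2).filter (fun a => a.2 ≤ c) = BC.1 := by
      ext a
      simp only [Finset.mem_filter, Finset.mem_union]
      constructor
      · rintro ⟨h | h, hf⟩
        · exact h
        · exact absurd hf (by have := hupw a h; omega)
      · intro h
        exact ⟨Or.inl h, by have := hwB a h; omega⟩
    have e2 : (BC.1 ∪ up c BC.2).filter (fun a => c + 1 ≤ a.1) = up c BC.2 := by
      ext a
      simp only [Finset.mem_filter, Finset.mem_union]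
      constructor
      · rintro ⟨h | h, hf⟩
        · exact absurd hf (by have := hwB a h; omega)
        · exact h
      · intro h
        exact ⟨Or.inr h, (hupw a h).1⟩
    show ((BC.1 ∪ up c BC.2).filter (fun a => a.2 ≤ c),
      down c ((BC.1 ∪ up c BC.2).filter (fun a => c + 1 ≤ a.1))) = BC
    rw [e1, e2, down_up]

lemma S_rec (n : ℕ) :
    (DS (n + 1)).card = (DS n).card +
      ∑ m ∈ Finset.range (n + 2), (DS (n + 1 - m)).card * (DW m).card := by
  have hsplit := Finset.card_filter_add_card_filter_not
    (s := DS (n + 1)) (p := fun A => ∃ a ∈ A, a.2 = n + 1)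
  have hnone : (DS (n + 1)).filter (fun A => ¬ ∃ a ∈ A, a.2 = n + 1) = DS n := by
    ext A
    simp only [Finset.mem_filter]
    constructor
    · rintro ⟨hA, hno⟩
      rw [mem_DS_iff] at hA ⊢
      obtain ⟨hw, hd, hnc, hmod⟩ := hA
      refine ⟨?_, hd, hnc, hmod⟩
      intro a ha
      have h1 := hw a ha
      have h2 : a.2 ≠ n + 1 := fun he => hno ⟨a, ha, he⟩
      omega
    · intro hA
      have hw := (mem_DS_iff.1 hA).1
      constructor
      · rw [mem_DS_iff] at hA ⊢
        obtain ⟨hw, hd, hnc, hmod⟩ := hA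
        exact ⟨fun a ha => by have := hw a ha; omega, hd, hnc, hmod⟩
      · rintro ⟨a, ha, he⟩
        have := hw a ha
        omega
  have hcover : (DS (n + 1)).filter (fun A => ∃ a ∈ A, a.2 = n + 1)
      = (Finset.Icc 2 (n + 1)).biUnion
          (fun m => (DS (n + 1)).filter (fun A => (n + 2 - m, n + 1) ∈ A)) := by
    ext A
    simp only [Finset.mem_filter, Finset.mem_biUnion, Finset.mem_Icc]
    constructor
    · rintro ⟨hA, a, ha, ha2⟩
      have hw := (mem_DS_iff.1 hA).1
      have hb := hw a ha
      refine ⟨n + 2 - a.1, by omega, hA, ?_⟩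
      have he : (n + 2 - (n + 2 - a.1), n + 1) = a :=
        Prod.ext (by show n + 2 - (n + 2 - a.1) = a.1; omega) ha2.symm
      rwa [he]
    · rintro ⟨m, hm, hA, harc⟩
      exact ⟨hA, (n + 2 - m, n + 1), harc, rfl⟩
  have hdisj : ∀ m ∈ Finset.Icc 2 (n + 1), ∀ m' ∈ Finset.Icc 2 (n + 1), m ≠ m' →
      Disjoint ((DS (n + 1)).filter (fun A => (n + 2 - m, n + 1) ∈ A))
        ((DS (n + 1)).filter (fun A => (n + 2 - m', n + 1) ∈ A)) := by
    intro m hm m' hm' hne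
    rw [Finset.mem_Icc] at hm hm'
    rw [Finset.disjoint_left]
    intro A hA hA'
    obtain ⟨hAS, h1⟩ := Finset.mem_filter.1 hA
    obtain ⟨-, h2⟩ := Finset.mem_filter.1 hA'
    have hd := (mem_DS_iff.1 hAS).2.1
    have hne2 : ((n + 2 - m : ℕ), (n + 1 : ℕ)) ≠ (n + 2 - m', n + 1) := by
      intro he; rw [Prod.ext_iff] at he; simp only at he; omega
    obtain ⟨-, -, -, v4⟩ := hd _ h1 _ h2 hne2
    exact v4 rfl
  have hblocks : ((DS (n + 1)).filter (fun A => ∃ a ∈ A, a.2 = n + 1)).card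
      = ∑ m ∈ Finset.Icc 2 (n + 1), (DS (n + 1 - m)).card * (DW m).card := by
    rw [hcover, Finset.card_biUnion hdisj]
    refine Finset.sum_congr rfl ?_
    intro m hm
    rw [Finset.mem_Icc] at hm
    have h1 : n + 1 - m + (m - 1) + 1 = n + 1 := by omega
    have h2 : n + 1 - m + 1 = n + 2 - m := by omega
    have h3 : m - 1 + 1 = m := by omega
    have hb := block_card (n + 1 - m) (m - 1)
    rw [h1, h2, h3] at hb
    exact hb
  have hext : ∑ m ∈ Finset.Icc 2 (n + 1), (DS (n + 1 - m)).card * (DW m).card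
      = ∑ m ∈ Finset.range (n + 2), (DS (n + 1 - m)).card * (DW m).card := by
    refine Finset.sum_subset ?_ ?_
    · intro m hm
      rw [Finset.mem_Icc] at hm
      rw [Finset.mem_range]
      omega
    · intro m hm hnm
      rw [Finset.mem_range] at hm
      rw [Finset.mem_Icc] at hnm
      have hm1 : m ≤ 6 := by omega
      rw [DW_small hm1]
      simp
  rw [hnone, hblocks, hext] at hsplit
  omega

-- ===== matchings: parity and the Catalan recursion =====

lemma DM_card {u : ℕ} {A : Finset (ℕ × ℕ)} (hA : A ∈ DM u) : u = 2 * A.card := by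
  rw [mem_DM_iff] at hA
  obtain ⟨hw, hd, -, hmat⟩ := hA
  have hV : Finset.Icc 1 u = A.image Prod.fst ∪ A.image Prod.snd := by
    ext v
    simp only [Finset.mem_Icc, Finset.mem_union, Finset.mem_image]
    constructor
    · intro hv
      obtain ⟨a, ha, hc⟩ := hmat v hv.1 hv.2
      rcases hc with h | h
      · exact Or.inl ⟨a, ha, h.symm⟩
      · exact Or.inr ⟨a, ha, h.symm⟩
    · rintro (⟨a, ha, rfl⟩ | ⟨a, ha, rfl⟩) <;> have := hw a ha <;> omega
  have hdisj : Disjoint (A.image Prod.fst) (A.image Prod.snd) := by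
    rw [Finset.disjoint_left]
    rintro x hx hy
    obtain ⟨a, ha, hax⟩ := Finset.mem_image.1 hx
    obtain ⟨b, hb, hbx⟩ := Finset.mem_image.1 hy
    by_cases hab : a = b
    · subst hab
      have := hw a ha
      omega
    · obtain ⟨-, u2, -, -⟩ := hd a ha b hb hab
      exact u2 (by omega)
  have hc1 : (A.image Prod.fst).card = A.card := by
    refine Finset.card_image_of_injOn ?_
    intro a ha b hb he
    by_contra hab
    exact (hd a ha b hb hab).1 he
  have hc2 : (A.image Prod.snd).card = A.card := by
    refine Finset.card_image_of_injOn ?_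
    intro a ha b hb he
    by_contra hab
    exact (hd a ha b hb hab).2.2.2 he
  have := Finset.card_union_of_disjoint hdisj
  rw [← hV, hc1, hc2, Nat.card_Icc] at this
  omega

lemma M_odd {u : ℕ} (hu : u % 2 = 1) : (DM u).card = 0 := by
  rw [Finset.card_eq_zero, Finset.eq_empty_iff_forall_notMem]
  intro A hA
  have := DM_card hA
  omega

lemma down_mem_DM {c t : ℕ} {A : Finset (ℕ × ℕ)}
    (hwin : ∀ a ∈ A, c + 1 ≤ a.1 ∧ a.1 < a.2 ∧ a.2 ≤ c + t)
    (hdisj : Disj A) (hnc : NC A)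
    (hmat : ∀ v : ℕ, c + 1 ≤ v → v ≤ c + t → ∃ a ∈ A, v = a.1 ∨ v = a.2) :
    down c A ∈ DM t := by
  rw [mem_DM_iff]
  refine ⟨?_, ?_, ?_, ?_⟩
  · intro p hp
    obtain ⟨a, ha, e1, e2⟩ := mem_down_elim hp
    have := hwin a ha
    omega
  · intro p hp q hq hpq
    obtain ⟨a, ha, ea1, ea2⟩ := mem_down_elim hp
    obtain ⟨b, hb, eb1, eb2⟩ := mem_down_elim hq
    have ha' := hwin a ha; have hb' := hwin b hb
    have hab : a ≠ b := by
      rintro rfl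
      exact hpq (Prod.ext (by omega) (by omega))
    have := hdisj a ha b hb hab
    exact ⟨by omega, by omega, by omega, by omega⟩
  · intro p hp q hq
    obtain ⟨a, ha, ea1, ea2⟩ := mem_down_elim hp
    obtain ⟨b, hb, eb1, eb2⟩ := mem_down_elim hq
    have ha' := hwin a ha; have hb' := hwin b hb
    have := hnc a ha b hb
    omega
  · intro v hv1 hv2
    obtain ⟨a, ha, hc⟩ := hmat (v + c) (by omega) (by omega)
    have ha' := hwin a ha
    refine ⟨(a.1 - c, a.2 - c), ?_, ?_⟩
    · simp only [down, Finset.mem_image]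
      exact ⟨a, ha, rfl⟩
    · rcases hc with h | h
      · left; show v = a.1 - c; omega
      · right; show v = a.2 - c; omega

lemma match_dichotomy {e g : ℕ} {A : Finset (ℕ × ℕ)} (hA : A ∈ DM (e + g + 2))
    (harc : (1, e + 2) ∈ A) :
    ∀ a ∈ A, a ≠ (1, e + 2) → (2 ≤ a.1 ∧ a.2 ≤ e + 1) ∨ e + 3 ≤ a.1 := by
  rw [mem_DM_iff] at hA
  obtain ⟨hw, hd, hnc, -⟩ := hA
  intro a ha hne
  obtain ⟨u1, u2, u3, u4⟩ := hd a ha _ harc hne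
  simp only at u1 u2 u3 u4
  have hb := hw a ha
  have := hnc _ harc a ha
  simp only at this
  omega

lemma match_block_card (e g : ℕ) :
    ((DM (e + g + 2)).filter (fun A => (1, e + 2) ∈ A)).card
      = (DM e).card * (DM g).card := by
  rw [← Finset.card_product]
  refine Finset.card_nbij'
    (fun A => (down 1 (A.filter (fun a => a.2 ≤ e + 1)),
               down (e + 2) (A.filter (fun a => e + 3 ≤ a.1))))
    (fun BC => insert (1, e + 2) (up 1 BC.1 ∪ up (e + 2) BC.2)) ?_ ?_ ?_ ?_
  · intro A hA
    obtain ⟨hA, harc⟩ := Finset.mem_filter.1 hA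
    have hdich := match_dichotomy hA harc
    rw [mem_DM_iff] at hA
    obtain ⟨hw, hd, hnc, hmat⟩ := hA
    have hwinI : ∀ a ∈ A.filter (fun a => a.2 ≤ e + 1),
        1 + 1 ≤ a.1 ∧ a.1 < a.2 ∧ a.2 ≤ 1 + e := by
      intro a ha
      obtain ⟨haA, hf⟩ := Finset.mem_filter.1 ha
      have hb := hw a haA
      have hne : a ≠ (1, e + 2) := by
        intro he; rw [he] at hf; simp at hf
      rcases hdich a haA hne with h | h <;> omega
    have hwinO : ∀ a ∈ A.filter (fun a => e + 3 ≤ a.1),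
        (e + 2) + 1 ≤ a.1 ∧ a.1 < a.2 ∧ a.2 ≤ (e + 2) + g := by
      intro a ha
      obtain ⟨haA, hf⟩ := Finset.mem_filter.1 ha
      have hb := hw a haA
      omega
    rw [Finset.mem_coe, Finset.mem_product]
    constructor
    · refine down_mem_DM hwinI (disj_mono (Finset.filter_subset _ _) hd)
        (nc_mono (Finset.filter_subset _ _) hnc) ?_
      intro v hv1 hv2
      obtain ⟨a, haA, hc⟩ := hmat v (by omega) (by omega)
      have hb := hw a haA
      have hne : a ≠ (1, e + 2) := by
        intro he; rw [he] at hc; simp only at hc; omega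
      rcases hdich a haA hne with h | h
      · exact ⟨a, Finset.mem_filter.2 ⟨haA, by omega⟩, hc⟩
      · omega
    · refine down_mem_DM hwinO (disj_mono (Finset.filter_subset _ _) hd)
        (nc_mono (Finset.filter_subset _ _) hnc) ?_
      intro v hv1 hv2
      obtain ⟨a, haA, hc⟩ := hmat v (by omega) (by omega)
      have hb := hw a haA
      have hne : a ≠ (1, e + 2) := by
        intro he; rw [he] at hc; simp only at hc; omega
      rcases hdich a haA hne with h | h
      · omega
      · exact ⟨a, Finset.mem_filter.2 ⟨haA, by omega⟩, hc⟩
  · intro BC hBC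
    obtain ⟨hB, hC⟩ := Finset.mem_product.1 hBC
    rw [mem_DM_iff] at hB hC
    obtain ⟨hwB, hdB, hncB, hmB⟩ := hB
    obtain ⟨hwC, hdC, hncC, hmC⟩ := hC
    have hupB := up_win (c := 1) hwB
    have hupC := up_win (c := e + 2) hwC
    rw [Finset.mem_coe, Finset.mem_filter]
    refine ⟨?_, Finset.mem_insert_self _ _⟩
    rw [mem_DM_iff]
    refine ⟨?_, ?_, ?_, ?_⟩
    · intro p hp
      rcases Finset.mem_insert.1 hp with hu | hu
      · subst hu; show 1 ≤ 1 ∧ 1 < e + 2 ∧ e + 2 ≤ e + g + 2; omega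
      rcases Finset.mem_union.1 hu with h | h
      · have := hupB p h; omega
      · have := hupC p h; omega
    · refine disj_insert ?_ ?_
      · intro p hp q hq hpq
        rcases Finset.mem_union.1 hp with h1 | h1 <;> rcases Finset.mem_union.1 hq with h2 | h2
        · exact up_disj hdB p h1 q h2 hpq
        · have := hupB p h1; have := hupC q h2
          exact ⟨by omega, by omega, by omega, by omega⟩
        · have := hupB q h2; have := hupC p h1
          exact ⟨by omega, by omega, by omega, by omega⟩
        · exact up_disj hdC p h1 q h2 hpq
      · intro b hb
        rcases Finset.mem_union.1 hb with h | h
        · have := hupB b h; simp only; omega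
        · have := hupC b h; simp only; omega
    · refine nc_insert ?_ (by show 1 < e + 2; omega) ?_ ?_
      · intro p hp q hq
        rcases Finset.mem_union.1 hp with h1 | h1 <;> rcases Finset.mem_union.1 hq with h2 | h2
        · exact up_nc hncB p h1 q h2
        · have := hupB p h1; have := hupC q h2; omega
        · have := hupB q h2; have := hupC p h1; omega
        · exact up_nc hncC p h1 q h2
      · intro b hb
        rcases Finset.mem_union.1 hb with h | h
        · have := hupB b h; simp only; omega
        · have := hupC b h; simp only; omega
      · intro b hb
        rcases Finset.mem_union.1 hb with h | h
        · have := hupB b h; simp only; omega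
        · have := hupC b h; simp only; omega
    · intro v hv1 hv2
      by_cases h1 : v = 1
      · exact ⟨(1, e + 2), Finset.mem_insert_self _ _, Or.inl h1⟩
      by_cases h2 : v = e + 2
      · exact ⟨(1, e + 2), Finset.mem_insert_self _ _, Or.inr h2⟩
      by_cases h3 : v ≤ e + 1
      · obtain ⟨b, hb, hc⟩ := hmB (v - 1) (by omega) (by omega)
        have := hwB b hb
        refine ⟨(b.1 + 1, b.2 + 1), ?_, ?_⟩
        · exact Finset.mem_insert_of_mem (Finset.mem_union_left _ (up_mem b hb))
        · rcases hc with h | h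
          · left; show v = b.1 + 1; omega
          · right; show v = b.2 + 1; omega
      · obtain ⟨b, hb, hc⟩ := hmC (v - (e + 2)) (by omega) (by omega)
        have := hwC b hb
        refine ⟨(b.1 + (e + 2), b.2 + (e + 2)), ?_, ?_⟩
        · exact Finset.mem_insert_of_mem (Finset.mem_union_right _ (up_mem b hb))
        · rcases hc with h | h
          · left; show v = b.1 + (e + 2); omega
          · right; show v = b.2 + (e + 2); omega
  · intro A hA
    obtain ⟨hA', harc⟩ := Finset.mem_filter.1 hA
    have hdich := match_dichotomy hA' harc
    rw [mem_DM_iff] at hA'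
    obtain ⟨hw, -, -, -⟩ := hA'
    have hwinI : ∀ a ∈ A.filter (fun a => a.2 ≤ e + 1), 1 + 1 ≤ a.1 ∧ a.1 < a.2 := by
      intro a ha
      obtain ⟨haA, hf⟩ := Finset.mem_filter.1 ha
      have hb := hw a haA
      have hne : a ≠ (1, e + 2) := by
        intro he; rw [he] at hf; simp at hf
      rcases hdich a haA hne with h | h <;> omega
    have hwinO : ∀ a ∈ A.filter (fun a => e + 3 ≤ a.1), (e + 2) + 1 ≤ a.1 ∧ a.1 < a.2 := by
      intro a ha
      obtain ⟨haA, hf⟩ := Finset.mem_filter.1 ha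
      have hb := hw a haA
      omega
    show insert (1, e + 2) (up 1 (down 1 (A.filter (fun a => a.2 ≤ e + 1)))
      ∪ up (e + 2) (down (e + 2) (A.filter (fun a => e + 3 ≤ a.1)))) = A
    rw [up_down hwinI, up_down hwinO]
    ext a
    simp only [Finset.mem_insert, Finset.mem_union, Finset.mem_filter]
    constructor
    · rintro (he | ⟨h, -⟩ | ⟨h, -⟩)
      · rw [he]; exact harc
      · exact h
      · exact h
    · intro ha
      by_cases he : a = (1, e + 2)
      · exact Or.inl he
      rcases hdich a ha he with h | h
      · exact Or.inr (Or.inl ⟨ha, h.2⟩)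
      · exact Or.inr (Or.inr ⟨ha, h⟩)
  · intro BC hBC
    obtain ⟨hB, hC⟩ := Finset.mem_product.1 hBC
    rw [mem_DM_iff] at hB hC
    obtain ⟨hwB, -, -, -⟩ := hB
    obtain ⟨hwC, -, -, -⟩ := hC
    have hupB := up_win (c := 1) hwB
    have hupC := up_win (c := e + 2) hwC
    have e1 : (insert (1, e + 2) (up 1 BC.1 ∪ up (e + 2) BC.2)).filter
        (fun a => a.2 ≤ e + 1) = up 1 BC.1 := by
      ext a
      simp only [Finset.mem_filter, Finset.mem_insert, Finset.mem_union]
      constructor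
      · rintro ⟨he | h | h, hf⟩
        · exfalso; rw [he] at hf; simp at hf
        · exact h
        · exact absurd hf (by have := hupC a h; omega)
      · intro h
        exact ⟨Or.inr (Or.inl h), by have := hupB a h; omega⟩
    have e2 : (insert (1, e + 2) (up 1 BC.1 ∪ up (e + 2) BC.2)).filter
        (fun a => e + 3 ≤ a.1) = up (e + 2) BC.2 := by
      ext a
      simp only [Finset.mem_filter, Finset.mem_insert, Finset.mem_union]
      constructor
      · rintro ⟨he | h | h, hf⟩
        · exfalso; rw [he] at hf; simp only at hf; omega
        · exact absurd hf (by have := hupB a h; omega)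
        · exact h
      · intro h
        exact ⟨Or.inr (Or.inr h), (hupC a h).1⟩
    show (down 1 ((insert (1, e + 2) (up 1 BC.1 ∪ up (e + 2) BC.2)).filter
        (fun a => a.2 ≤ e + 1)),
      down (e + 2) ((insert (1, e + 2) (up 1 BC.1 ∪ up (e + 2) BC.2)).filter
        (fun a => e + 3 ≤ a.1))) = BC
    rw [e1, e2, down_up, down_up]

lemma M_rec (n : ℕ) :
    (DM (2 * n + 2)).card
      = ∑ m ∈ Finset.range (n + 1), (DM (2 * m)).card * (DM (2 * (n - m))).card := by
  have hcover : DM (2 * n + 2)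
      = (Finset.Icc 2 (2 * n + 2)).biUnion
          (fun j => (DM (2 * n + 2)).filter (fun A => (1, j) ∈ A)) := by
    ext A
    simp only [Finset.mem_biUnion, Finset.mem_filter, Finset.mem_Icc]
    constructor
    · intro hA
      obtain ⟨hw, -, -, hmat⟩ := mem_DM_iff.1 hA
      obtain ⟨a, ha, hc⟩ := hmat 1 le_rfl (by omega)
      have hb := hw a ha
      have h1 : a.1 = 1 := by omega
      refine ⟨a.2, by omega, hA, ?_⟩
      have he : ((1 : ℕ), a.2) = a := Prod.ext h1.symm rfl
      rwa [he]
    · rintro ⟨j, -, hA, -⟩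
      exact hA
  have hdisj : ∀ j ∈ Finset.Icc 2 (2 * n + 2), ∀ j' ∈ Finset.Icc 2 (2 * n + 2), j ≠ j' →
      Disjoint ((DM (2 * n + 2)).filter (fun A => (1, j) ∈ A))
        ((DM (2 * n + 2)).filter (fun A => (1, j') ∈ A)) := by
    intro j hj j' hj' hne
    rw [Finset.disjoint_left]
    intro A hA hA'
    obtain ⟨hAS, h1⟩ := Finset.mem_filter.1 hA
    obtain ⟨-, h2⟩ := Finset.mem_filter.1 hA'
    have hd := (mem_DM_iff.1 hAS).2.1
    have hne2 : ((1 : ℕ), j) ≠ (1, j') := by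
      intro he; rw [Prod.ext_iff] at he; simp only at he; exact hne he.2
    obtain ⟨v1, -, -, -⟩ := hd _ h1 _ h2 hne2
    exact v1 rfl
  rw [hcover, Finset.card_biUnion hdisj]
  have hterm : ∀ j ∈ Finset.Icc 2 (2 * n + 2),
      ((DM (2 * n + 2)).filter (fun A => (1, j) ∈ A)).card
        = (DM (j - 2)).card * (DM (2 * n + 2 - j)).card := by
    intro j hj
    rw [Finset.mem_Icc] at hj
    have h1 : j - 2 + (2 * n + 2 - j) + 2 = 2 * n + 2 := by omega
    have h2 : j - 2 + 2 = j := by omega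
    have hb := match_block_card (j - 2) (2 * n + 2 - j)
    rw [h1, h2] at hb
    exact hb
  rw [Finset.sum_congr rfl hterm]
  have hsub : ∑ j ∈ Finset.Icc 2 (2 * n + 2), (DM (j - 2)).card * (DM (2 * n + 2 - j)).card
      = ∑ j ∈ (Finset.Icc 2 (2 * n + 2)).filter (fun j => j % 2 = 0),
          (DM (j - 2)).card * (DM (2 * n + 2 - j)).card := by
    refine (Finset.sum_subset (Finset.filter_subset _ _) ?_).symm
    intro j hj hnj
    rw [Finset.mem_Icc] at hj
    rw [Finset.mem_filter, Finset.mem_Icc] at hnj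
    have hodd : (j - 2) % 2 = 1 := by omega
    rw [M_odd hodd, zero_mul]
  rw [hsub]
  refine (Finset.sum_nbij' (fun m => 2 * m + 2) (fun j => (j - 2) / 2) ?_ ?_ ?_ ?_ ?_).symm
  · intro m hm
    rw [Finset.mem_range] at hm
    rw [Finset.mem_filter, Finset.mem_Icc]
    beta_reduce
    omega
  · intro j hj
    rw [Finset.mem_filter, Finset.mem_Icc] at hj
    rw [Finset.mem_range]
    beta_reduce
    omega
  · intro m hm
    beta_reduce
    omega
  · intro j hj
    rw [Finset.mem_filter, Finset.mem_Icc] at hj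
    beta_reduce
    omega
  · intro m hm
    rw [Finset.mem_range] at hm
    have e1 : 2 * m + 2 - 2 = 2 * m := by omega
    have e2 : 2 * n + 2 - (2 * m + 2) = 2 * (n - m) := by omega
    rw [e1, e2]

-- ===== power series =====

open PowerSeries

noncomputable def Snum (n : ℕ) : ℕ := (DS n).card
noncomputable def Wnum (n : ℕ) : ℕ := (DW n).card
noncomputable def SpS : PowerSeries ℚ := PowerSeries.mk fun n => (Snum n : ℚ)
noncomputable def WpS : PowerSeries ℚ := PowerSeries.mk fun n => (Wnum n : ℚ)

lemma Snum_small {n : ℕ} (hn : n ≤ 4) : Snum n = 1 := by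
  rw [Snum, DS_small hn, Finset.card_singleton]

lemma Wnum_small {n : ℕ} (hn : n ≤ 6) : Wnum n = 0 := by
  rw [Wnum, DW_small hn, Finset.card_empty]

lemma E1 : SpS = 1 + X * SpS + SpS * WpS := by
  ext n
  unfold SpS WpS
  rw [map_add, map_add]
  cases n with
  | zero =>
    rw [coeff_mk, coeff_zero_X_mul, PowerSeries.coeff_mul]
    simp only [Finset.Nat.antidiagonal_zero, Finset.sum_singleton, coeff_one, coeff_mk]
    rw [Snum_small (by norm_num), Wnum_small (by norm_num)]
    norm_num
  | succ n =>
    rw [coeff_mk, coeff_succ_X_mul, coeff_mk, PowerSeries.coeff_mul,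
      Finset.Nat.sum_antidiagonal_eq_sum_range_succ_mk, coeff_one]
    simp only [coeff_mk]
    have hr : ∑ m ∈ Finset.range (n + 2), ((Snum (n + 1 - m) : ℚ) * (Wnum m : ℚ))
        = ∑ k ∈ Finset.range (n + 2), (Snum k : ℚ) * (Wnum (n + 1 - k) : ℚ) := by
      rw [← Finset.sum_range_reflect]
      refine Finset.sum_congr rfl ?_
      intro j hj
      rw [Finset.mem_range] at hj
      have e1 : n + 2 - 1 - j = n + 1 - j := by omega
      rw [e1]
      have e2 : n + 1 - (n + 1 - j) = j := by omega
      rw [e2]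
    rw [← hr]
    have hcast : (Snum (n + 1) : ℚ)
        = (Snum n : ℚ) + ∑ m ∈ Finset.range (n + 2), (Snum (n + 1 - m) : ℚ) * (Wnum m : ℚ) := by
      unfold Snum Wnum
      exact_mod_cast S_rec n
    rw [hcast]
    norm_num

noncomputable def Xnum (n : ℕ) : ℕ := (DX n).card
noncomputable def Mnum (n : ℕ) : ℕ := (DM n).card

lemma E2 : (1 - X ^ 2 + X ^ 4) * WpS = X ^ 4 * (SpS - 1 - X - X ^ 2) := by
  have hring : (1 - X ^ 2 + X ^ 4) * WpS = WpS - X ^ 2 * WpS + X ^ 4 * WpS := by ring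
  rw [hring]
  ext n
  rw [map_add, map_sub]
  rcases lt_or_ge n 7 with h | h
  · have c0 : PowerSeries.coeff n WpS = 0 := by
      unfold WpS
      rw [coeff_mk, Wnum_small (by omega)]
      norm_num
    have c2 : PowerSeries.coeff n (X ^ 2 * WpS) = 0 := by
      rw [coeff_X_pow_mul']
      split_ifs with hc
      · unfold WpS; rw [coeff_mk, Wnum_small (by omega)]; norm_num
      · rfl
    have c4 : PowerSeries.coeff n (X ^ 4 * WpS) = 0 := by
      rw [coeff_X_pow_mul']
      split_ifs with hc
      · unfold WpS; rw [coeff_mk, Wnum_small (by omega)]; norm_num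
      · rfl
    have cr : PowerSeries.coeff n (X ^ 4 * (SpS - 1 - X - X ^ 2)) = 0 := by
      rw [coeff_X_pow_mul']
      split_ifs with hc
      · rw [map_sub, map_sub, map_sub]
        unfold SpS
        rw [coeff_mk, Snum_small (by omega), coeff_one, coeff_X, coeff_X_pow]
        have h4 : n - 4 ≤ 2 := by omega
        interval_cases hn : (n - 4) <;> norm_num
      · rfl
    rw [c0, c2, c4, cr]
    ring
  · obtain ⟨m, rfl⟩ : ∃ m, n = m + 7 := ⟨n - 7, by omega⟩
    have c0 : PowerSeries.coeff (m + 7) WpS = (Wnum (m + 7) : ℚ) := by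
      unfold WpS; rw [coeff_mk]
    have c2 : PowerSeries.coeff (m + 7) (X ^ 2 * WpS) = (Wnum (m + 5) : ℚ) := by
      have e : m + 7 = (m + 5) + 2 := by omega
      rw [e, coeff_X_pow_mul]
      unfold WpS; rw [coeff_mk]
    have c4 : PowerSeries.coeff (m + 7) (X ^ 4 * WpS) = (Wnum (m + 3) : ℚ) := by
      have e : m + 7 = (m + 3) + 4 := by omega
      rw [e, coeff_X_pow_mul]
      unfold WpS; rw [coeff_mk]
    have cr : PowerSeries.coeff (m + 7) (X ^ 4 * (SpS - 1 - X - X ^ 2))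
        = (Snum (m + 3) : ℚ) := by
      have e : m + 7 = (m + 3) + 4 := by omega
      rw [e, coeff_X_pow_mul, map_sub, map_sub, map_sub]
      unfold SpS
      rw [coeff_mk, coeff_one, if_neg (by omega), coeff_X, if_neg (by omega),
        coeff_X_pow, if_neg (by omega)]
      ring
    rw [c0, c2, c4, cr]
    have h1 : Wnum (m + 7) = Wnum (m + 5) + Xnum (m + 3) := by
      unfold Wnum Xnum; exact W_rec m
    have h2 : Snum (m + 3) = Wnum (m + 3) + Xnum (m + 3) := by
      unfold Snum Wnum Xnum; exact card_split (m + 3)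
    have h1' : (Wnum (m + 7) : ℚ) = (Wnum (m + 5) : ℚ) + (Xnum (m + 3) : ℚ) := by
      exact_mod_cast h1
    have h2' : (Snum (m + 3) : ℚ) = (Wnum (m + 3) : ℚ) + (Xnum (m + 3) : ℚ) := by
      exact_mod_cast h2
    linarith

lemma Mnum_zero : Mnum 0 = 1 := by
  rw [Mnum, DM_zero, Finset.card_singleton]

lemma fk2_eq (n : ℕ) : fk 2 n = Mnum (2 * n) := fk_eq_card_DM n

lemma E3 : FkPS 2 = 1 + X * (FkPS 2) ^ 2 := by
  ext n
  unfold FkPS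
  rw [map_add]
  cases n with
  | zero =>
    rw [coeff_mk, coeff_zero_X_mul, coeff_one, if_pos rfl, fk2_eq]
    norm_num [Mnum_zero]
  | succ n =>
    rw [coeff_mk, coeff_succ_X_mul, coeff_one, if_neg (by omega), pow_two,
      PowerSeries.coeff_mul, Finset.Nat.sum_antidiagonal_eq_sum_range_succ_mk]
    simp only [coeff_mk, zero_add]
    simp only [fk2_eq]
    have e : 2 * (n + 1) = 2 * n + 2 := by ring
    rw [e]
    unfold Mnum
    exact_mod_cast M_rec n

lemma fk2_zero : fk 2 0 = 1 := by
  rw [fk2_eq]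
  norm_num [Mnum_zero]

lemma cat_sum (k : ℕ) :
    ∑ p ∈ Finset.HasAntidiagonal.antidiagonal k, (fk 2 p.1 : ℚ) * (fk 2 p.2 : ℚ) = (fk 2 (k + 1) : ℚ) := by
  rw [Finset.Nat.sum_antidiagonal_eq_sum_range_succ_mk]
  simp only [fk2_eq]
  have e : 2 * (k + 1) = 2 * k + 2 := by ring
  rw [e]
  unfold Mnum
  exact_mod_cast (M_rec k).symm

lemma coeff_pow_eq_zero {g : PowerSeries ℚ} (hg : PowerSeries.constantCoeff g = 0)
    {n m : ℕ} (h : n < m) : PowerSeries.coeff n (g ^ m) = 0 := by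
  obtain ⟨u, hu⟩ := pow_dvd_pow_of_dvd (PowerSeries.X_dvd_iff.2 hg) m
  rw [hu, coeff_X_pow_mul', if_neg (by omega)]

lemma coeff_FkComp (g : PowerSeries ℚ) (n : ℕ) :
    PowerSeries.coeff n (FkComp 2 g)
      = ∑ m ∈ Finset.range (n + 1), (fk 2 m : ℚ) * PowerSeries.coeff n (g ^ m) := by
  rw [FkComp, coeff_mk]

lemma coeff_FkComp_trunc {g : PowerSeries ℚ} (hg : PowerSeries.constantCoeff g = 0)
    {n j : ℕ} (hj : j ≤ n) :
    PowerSeries.coeff j (FkComp 2 g)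
      = PowerSeries.coeff j
          (∑ m ∈ Finset.range (n + 1), PowerSeries.C (fk 2 m : ℚ) * g ^ m) := by
  rw [coeff_FkComp, map_sum]
  simp only [PowerSeries.coeff_C_mul]
  refine Finset.sum_subset ?_ ?_
  · intro m hm
    rw [Finset.mem_range] at hm ⊢
    omega
  · intro m hm hnm
    rw [Finset.mem_range] at hm hnm
    rw [coeff_pow_eq_zero hg (by omega), mul_zero]

lemma E4 {g : PowerSeries ℚ} (hg : PowerSeries.constantCoeff g = 0) :
    FkComp 2 g = 1 + g * (FkComp 2 g) ^ 2 := by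
  ext n
  set T := ∑ m ∈ Finset.range (n + 1), PowerSeries.C (fk 2 m : ℚ) * g ^ m with hT
  have hA : ∀ j ≤ n, PowerSeries.coeff j (FkComp 2 g) = PowerSeries.coeff j T :=
    fun j hj => coeff_FkComp_trunc hg hj
  have h2 : PowerSeries.coeff n (g * (FkComp 2 g) ^ 2)
      = PowerSeries.coeff n (g * T ^ 2) := by
    have hdiff : g * (FkComp 2 g) ^ 2 - g * T ^ 2
        = (FkComp 2 g - T) * (g * (FkComp 2 g + T)) := by ring
    have hz : PowerSeries.coeff n ((FkComp 2 g - T) * (g * (FkComp 2 g + T))) = 0 := by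
      rw [PowerSeries.coeff_mul]
      refine Finset.sum_eq_zero ?_
      intro p hp
      rw [Finset.HasAntidiagonal.mem_antidiagonal] at hp
      rw [map_sub, hA p.1 (by omega), sub_self, zero_mul]
    have hc := congrArg (PowerSeries.coeff n) hdiff
    rw [map_sub, hz] at hc
    linarith
  rw [map_add, h2, hA n le_rfl]
  have hexp : g * T ^ 2 = ∑ a ∈ Finset.range (n + 1), ∑ b ∈ Finset.range (n + 1),
      PowerSeries.C (fk 2 a : ℚ) * (PowerSeries.C (fk 2 b : ℚ) * g ^ (a + b + 1)) := by
    rw [hT, pow_two, Finset.sum_mul_sum, Finset.mul_sum]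
    refine Finset.sum_congr rfl fun a _ => ?_
    rw [Finset.mul_sum]
    refine Finset.sum_congr rfl fun b _ => ?_
    ring
  rw [hexp, map_sum]
  simp only [map_sum, PowerSeries.coeff_C_mul]
  have hdouble : ∑ a ∈ Finset.range (n + 1), ∑ b ∈ Finset.range (n + 1),
      (fk 2 a : ℚ) * ((fk 2 b : ℚ) * PowerSeries.coeff n (g ^ (a + b + 1)))
      = ∑ k ∈ Finset.range n, (fk 2 (k + 1) : ℚ) * PowerSeries.coeff n (g ^ (k + 1)) := by
    rw [← Finset.sum_product']
    have hsub : (Finset.range n).biUnion (fun k => Finset.HasAntidiagonal.antidiagonal k)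
        ⊆ Finset.range (n + 1) ×ˢ Finset.range (n + 1) := by
      intro p hp
      rw [Finset.mem_biUnion] at hp
      obtain ⟨k, hk, hpk⟩ := hp
      rw [Finset.mem_range] at hk
      rw [Finset.HasAntidiagonal.mem_antidiagonal] at hpk
      rw [Finset.mem_product, Finset.mem_range, Finset.mem_range]
      omega
    have hzero : ∀ p ∈ Finset.range (n + 1) ×ˢ Finset.range (n + 1),
        p ∉ (Finset.range n).biUnion (fun k => Finset.HasAntidiagonal.antidiagonal k) →
        (fk 2 p.1 : ℚ) * ((fk 2 p.2 : ℚ) * PowerSeries.coeff n (g ^ (p.1 + p.2 + 1))) = 0 := by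
      intro p hp hnp
      have hge : n ≤ p.1 + p.2 := by
        by_contra hlt
        push_neg at hlt
        exact hnp (Finset.mem_biUnion.2 ⟨p.1 + p.2, Finset.mem_range.2 hlt,
          Finset.HasAntidiagonal.mem_antidiagonal.2 rfl⟩)
      rw [coeff_pow_eq_zero hg (by omega), mul_zero, mul_zero]
    have hdisjk : ∀ k ∈ Finset.range n, ∀ k' ∈ Finset.range n, k ≠ k' →
        Disjoint (Finset.HasAntidiagonal.antidiagonal k) (Finset.HasAntidiagonal.antidiagonal k') := by
      intro k _ k' _ hne
      rw [Finset.disjoint_left]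
      intro p hp hp'
      rw [Finset.HasAntidiagonal.mem_antidiagonal] at hp hp'
      exact hne (hp ▸ hp')
    rw [← Finset.sum_subset hsub hzero, Finset.sum_biUnion hdisjk]
    refine Finset.sum_congr rfl fun k hk => ?_
    have : ∀ p ∈ Finset.HasAntidiagonal.antidiagonal k,
        (fk 2 p.1 : ℚ) * ((fk 2 p.2 : ℚ) * PowerSeries.coeff n (g ^ (p.1 + p.2 + 1)))
        = (fk 2 p.1 : ℚ) * (fk 2 p.2 : ℚ) * PowerSeries.coeff n (g ^ (k + 1)) := by
      intro p hp
      rw [Finset.HasAntidiagonal.mem_antidiagonal] at hp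
      rw [hp, mul_assoc]
    rw [Finset.sum_congr rfl this, ← Finset.sum_mul, cat_sum]
  rw [hdouble, Finset.sum_range_succ', pow_zero, fk2_zero]
  push_cast
  ring
end ModularDiagrams

namespace ModularDiagrams

open PowerSeries

/-- The generating function of modular noncrossing diagrams:
`∑ₙ Q₂(n) zⁿ = ((1 - z² + z⁴)/(1 - z - z² + z³ + 2z⁴ + z⁶)) ·
F₂((z⁴ - z⁶ + z⁸)/(1 - z - z² + z³ + 2z⁴ + z⁶)²)`. -/
theorem modular_gf_two :
    (PowerSeries.mk fun n => (Qk 2 n : ℚ)) =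
      (1 - X ^ 2 + X ^ 4) *
        (1 - X - X ^ 2 + X ^ 3 + 2 * X ^ 4 + X ^ 6 : PowerSeries ℚ)⁻¹ *
        FkComp 2
          ((X ^ 4 - X ^ 6 + X ^ 8) *
            ((1 - X - X ^ 2 + X ^ 3 + 2 * X ^ 4 + X ^ 6 : PowerSeries ℚ)⁻¹) ^ 2) := by
  have hPc : PowerSeries.constantCoeff
      (1 - X - X ^ 2 + X ^ 3 + 2 * X ^ 4 + X ^ 6 : PowerSeries ℚ) = 1 := by
    simp
  have hPne : PowerSeries.constantCoeff
      (1 - X - X ^ 2 + X ^ 3 + 2 * X ^ 4 + X ^ 6 : PowerSeries ℚ) ≠ 0 := by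
    rw [hPc]; norm_num
  have hPinv := PowerSeries.mul_inv_cancel _ hPne
  have hgc : PowerSeries.constantCoeff
      ((X ^ 4 - X ^ 6 + X ^ 8) *
        ((1 - X - X ^ 2 + X ^ 3 + 2 * X ^ 4 + X ^ 6 : PowerSeries ℚ)⁻¹) ^ 2) = 0 := by
    rw [map_mul]
    have h0 : PowerSeries.constantCoeff ((X ^ 4 - X ^ 6 + X ^ 8 : PowerSeries ℚ)) = 0 := by
      simp
    rw [h0, zero_mul]
  have hD := E4 hgc
  have hSp : (PowerSeries.mk fun n => (Qk 2 n : ℚ)) = SpS := by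
    ext n
    rw [coeff_mk]
    unfold SpS
    rw [coeff_mk]
    have := Qk_eq_card_DS n
    unfold Snum
    exact_mod_cast this
  rw [hSp]
  set D := FkComp 2 ((X ^ 4 - X ^ 6 + X ^ 8) *
    ((1 - X - X ^ 2 + X ^ 3 + 2 * X ^ 4 + X ^ 6 : PowerSeries ℚ)⁻¹) ^ 2) with hDdef
  set u := (1 - X - X ^ 2 + X ^ 3 + 2 * X ^ 4 + X ^ 6 : PowerSeries ℚ)⁻¹ with hu
  have EQ1 : (1 - X - X ^ 2 + X ^ 3 + 2 * X ^ 4 + X ^ 6 : PowerSeries ℚ) * SpS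
      = (1 - X ^ 2 + X ^ 4) + X ^ 4 * SpS ^ 2 := by
    linear_combination (1 - X ^ 2 + X ^ 4 : PowerSeries ℚ) * E1 + SpS * E2
  have EQ2 : (1 - X - X ^ 2 + X ^ 3 + 2 * X ^ 4 + X ^ 6 : PowerSeries ℚ)
        * ((1 - X ^ 2 + X ^ 4) * u * D)
      = (1 - X ^ 2 + X ^ 4) + X ^ 4 * ((1 - X ^ 2 + X ^ 4) * u * D) ^ 2 := by
    linear_combination ((1 - X ^ 2 + X ^ 4 : PowerSeries ℚ) * D) * hPinv
      + (1 - X ^ 2 + X ^ 4 : PowerSeries ℚ) * hD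
  have key : ((1 - X - X ^ 2 + X ^ 3 + 2 * X ^ 4 + X ^ 6 : PowerSeries ℚ)
      - X ^ 4 * (SpS + (1 - X ^ 2 + X ^ 4) * u * D))
      * (SpS - (1 - X ^ 2 + X ^ 4) * u * D) = 0 := by
    linear_combination EQ1 - EQ2
  have hne : ((1 - X - X ^ 2 + X ^ 3 + 2 * X ^ 4 + X ^ 6 : PowerSeries ℚ)
      - X ^ 4 * (SpS + (1 - X ^ 2 + X ^ 4) * u * D)) ≠ 0 := by
    intro h0
    have hcc := congrArg (PowerSeries.constantCoeff) h0
    rw [map_sub, hPc, map_mul, map_pow, PowerSeries.constantCoeff_X, map_zero] at hcc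
    norm_num at hcc
  have hz := (mul_eq_zero.1 key).resolve_left hne
  exact sub_eq_zero.1 hz

end ModularDiagrams
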